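/- Let $b \in \{0,1\}^{n\times N}$ be a matrix with exactly $\ell N$ entries equal to $1$, and let $G$ satisfy $\Pro(g(i)=j)=1/N$ and $\Pro(g(i_1)=j_1,g(i_2)=j_2)\le C_G/N^2$ for distinct pairs, $C_G\ge 1$. Then for all integers $k$ with $1 \le k \le \ell/2$, $\E\, \kmax_{1\le i\le n} b_{ig(i)} \ge \frac{1}{2+4C_G}$. -/

import Mathlib

/-- `kmax x k` is the `k`-th largest entry (1-indexed) of the vector `x`. -/
noncomputable def kmax {n : ℕ} (x : Fin n → ℝ) (k : ℕ) : ℝ :=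
  ((List.ofFn x).mergeSort (fun a b => decide (b ≤ a))).getD (k - 1) 0

lemma kmax_nonneg {n : ℕ} (x : Fin n → ℝ) (hx : ∀ i, 0 ≤ x i) (k : ℕ) :
    0 ≤ kmax x k := by
  unfold kmax
  set l := (List.ofFn x).mergeSort (fun a b => decide (b ≤ a)) with hl
  by_cases h : k - 1 < l.length
  · rw [List.getD_eq_getElem _ _ h]
    have hmem : l[k-1] ∈ l := List.getElem_mem h
    have : l[k-1] ∈ List.ofFn x := (List.mergeSort_perm _ _).mem_iff.mp hmem
    obtain ⟨i, hi⟩ := List.mem_ofFn.mp this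
    rw [← hi]; exact hx i
  · rw [List.getD_eq_default _ _ (le_of_not_gt h)]

lemma countP_eq_card {n : ℕ} (x : Fin n → ℝ) :
    (List.ofFn x).countP (fun a => decide (a = 1)) =
      (Finset.univ.filter fun i => x i = 1).card := by
  rw [List.ofFn_eq_map, List.countP_map]
  simp only [Fin.univ_def, Finset.filter, Multiset.filter_coe, List.countP_eq_length_filter,
    Function.comp_def]
  rfl

lemma kmax_ge_one {n : ℕ} (x : Fin n → ℝ) (hx : ∀ i, x i = 0 ∨ x i = 1) (k : ℕ)
    (hk1 : 1 ≤ k) (hk : k ≤ (Finset.univ.filter fun i => x i = 1).card) :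
    1 ≤ kmax x k := by
  unfold kmax
  set le := fun a b : ℝ => decide (b ≤ a) with hle
  set l := (List.ofFn x).mergeSort le with hl
  have hperm : l.Perm (List.ofFn x) := List.mergeSort_perm _ _
  have hsorted : l.Pairwise (fun a b => le a b = true) :=
    List.pairwise_mergeSort (by simp [hle]; exact fun a b c h h' => h'.trans h)
      (by simp [hle]; exact fun a b => le_total b a) _
  have hcount : l.countP (fun a => decide (a = 1)) = (Finset.univ.filter fun i => x i = 1).card := by
    rw [hperm.countP_eq, countP_eq_card]
  have hcle : l.countP (fun a => decide (a = 1)) ≤ l.length := List.countP_le_length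
  have hlen : k - 1 < l.length := by omega
  have hmeml : ∀ a ∈ l, a = 0 ∨ a = 1 := by
    intro a ha
    obtain ⟨i, hi⟩ := List.mem_ofFn.mp (hperm.mem_iff.mp ha)
    rw [← hi]; exact hx i
  rw [List.getD_eq_getElem _ _ hlen]
  rcases hmeml _ (List.getElem_mem hlen) with h0 | h1
  · exfalso
    -- count argument
    have hdrop : l.drop (k-1) = l[k-1] :: l.drop k := by
      have hk' : k - 1 + 1 = k := by omega
      rw [List.drop_eq_getElem_cons hlen, hk']
    have hpd : (l.drop (k-1)).Pairwise (fun a b => le a b = true) :=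
      hsorted.sublist (List.drop_sublist _ _)
    rw [hdrop, List.pairwise_cons] at hpd
    have hzero : (l.drop (k-1)).countP (fun a => decide (a = 1)) = 0 := by
      rw [List.countP_eq_zero]
      intro a ha
      rw [hdrop] at ha
      simp only [decide_eq_true_eq]
      rcases List.mem_cons.mp ha with rfl | hmem
      · rw [h0]; norm_num
      · have := hpd.1 a hmem
        simp only [hle, decide_eq_true_eq] at this
        rw [h0] at this
        intro h1'
        rw [h1'] at this
        linarith
    have hsplit : l.countP (fun a => decide (a = 1)) =
        (l.take (k-1)).countP (fun a => decide (a = 1)) +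
        (l.drop (k-1)).countP (fun a => decide (a = 1)) := by
      conv_lhs => rw [← List.take_append_drop (k-1) l]
      rw [List.countP_append]
    have ht : (l.take (k-1)).countP (fun a => decide (a = 1)) ≤ k - 1 :=
      le_trans (List.countP_le_length) (by simp)
    omega
  · rw [h1]

lemma aux_main (L K C M R : ℝ) (hC : 1 ≤ C) (hL2 : 2 ≤ L) (hK1 : 1 ≤ K)
    (hLK : 2 * K ≤ L) (hM : 0 < M) (hR0 : 0 ≤ R)
    (hF23 : ((L - K) * M) ^ 2 ≤ (L * M + C * L ^ 2 * M) * R) :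
    M ≤ (2 + 4 * C) * R := by
  have hQpos : 0 < (L + C * L ^ 2) * M := by
    apply mul_pos (by nlinarith) hM
  have hE : (L + C * L ^ 2) ≤ (2 + 4 * C) * (L - K) ^ 2 := by
    have h1 : (0:ℝ) ≤ (L - 2*K) * (3*L - 2*K) := mul_nonneg (by linarith) (by linarith)
    have h2 : (0:ℝ) ≤ C * ((L - 2*K) * (3*L - 2*K)) := mul_nonneg (by linarith) h1
    have h3 : (0:ℝ) ≤ L * (L - 2) := mul_nonneg (by linarith) (by linarith)
    nlinarith [h1, h2, h3]
  have key : (L + C * L ^ 2) * M * M ≤ (L + C * L ^ 2) * M * ((2 + 4 * C) * R) := by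
    nlinarith [hF23, hE, hR0, sq_nonneg (L - K), sq_nonneg M, mul_pos hM hM]
  exact le_of_mul_le_mul_left key hQpos

/-- Lemma 3.6: for a 0-1 matrix `b` with exactly `ℓN` ones,
`E kmax b_{i g(i)} ≥ 1/(2+4C_G)` for every `1 ≤ k ≤ ℓ/2`. -/
theorem stmt14 (n N ℓ : ℕ) (hℓ : ℓ ≤ n)
    (b : Fin n → Fin N → ℝ)
    (hb01 : ∀ i j, b i j = 0 ∨ b i j = 1)
    (hones : ((Finset.univ : Finset (Fin n × Fin N)).filter
      fun p => b p.1 p.2 = 1).card = ℓ * N)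
    (G : Finset (Fin n → Fin N)) (hG : G.Nonempty)
    (C : ℝ) (hC : 1 ≤ C)
    (h1 : ∀ i : Fin n, ∀ j : Fin N,
      ((G.filter fun g => g i = j).card : ℝ) / G.card = 1 / N)
    (h2 : ∀ p q : Fin n × Fin N, p ≠ q →
      ((G.filter fun g => g p.1 = p.2 ∧ g q.1 = q.2).card : ℝ) / G.card
        ≤ C / (N : ℝ) ^ 2)
    (k : ℕ) (hk1 : 1 ≤ k) (hk2 : 2 * k ≤ ℓ) :
    (∑ g ∈ G, kmax (fun i => b i (g i)) k) / G.card ≥ 1 / (2 + 4 * C) := by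
  classical
  obtain ⟨g₀, hg₀⟩ := hG
  have hℓ2 : 2 ≤ ℓ := by omega
  have hn : 0 < n := by omega
  have hN : 0 < N := Fin.pos (g₀ ⟨0, hn⟩)
  have hM : 0 < G.card := Finset.card_pos.mpr ⟨g₀, hg₀⟩
  set M : ℝ := (G.card : ℝ) with hMdef
  have hMpos : 0 < M := by rw [hMdef]; exact_mod_cast hM
  have hNpos : 0 < (N : ℝ) := by exact_mod_cast hN
  set ones : Finset (Fin n × Fin N) :=
    Finset.univ.filter (fun p => b p.1 p.2 = 1) with hones_def
  set f : (Fin n → Fin N) → ℝ :=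
    fun g => ∑ p ∈ ones, if g p.1 = p.2 then (1:ℝ) else 0 with hf_def
  -- f g equals number of i with b i (g i) = 1
  have hfX : ∀ g, f g = ((Finset.univ.filter fun i => b i (g i) = 1).card : ℝ) := by
    intro g
    show (∑ p ∈ ones, if g p.1 = p.2 then (1:ℝ) else 0) = _
    rw [hones_def, Finset.sum_filter, Finset.card_filter, Fintype.sum_prod_type]
    push_cast
    refine Finset.sum_congr rfl fun i _ => ?_
    have key : ∀ j : Fin N, (if b i j = 1 then (if g i = j then (1:ℝ) else 0) else 0)
        = if j = g i then (if b i j = 1 then (1:ℝ) else 0) else 0 := by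
      intro j
      by_cases h : j = g i
      · subst h; simp
      · simp [h, show ¬ g i = j from fun hh => h hh.symm]
    rw [Finset.sum_congr rfl fun j _ => key j, Finset.sum_ite_eq' Finset.univ (g i)]
    simp
  have hfnonneg : ∀ g, 0 ≤ f g := by
    intro g
    apply Finset.sum_nonneg
    intro p _
    positivity
  -- single-coordinate counts
  have hcard1 : ∀ p : Fin n × Fin N, ((G.filter fun g => g p.1 = p.2).card : ℝ) = M / N := by
    intro p
    have := h1 p.1 p.2
    rw [div_eq_div_iff (ne_of_gt hMpos) (ne_of_gt hNpos)] at this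
    rw [eq_div_iff (ne_of_gt hNpos)]
    linarith
  -- first moment
  have hS1 : ∑ g ∈ G, f g = ℓ * M := by
    rw [hf_def, Finset.sum_comm]
    have : ∀ p : Fin n × Fin N, (∑ g ∈ G, if g p.1 = p.2 then (1:ℝ) else 0) = M / N := by
      intro p
      rw [Finset.sum_boole]
      exact hcard1 p
    rw [Finset.sum_congr rfl fun p _ => this p, Finset.sum_const, nsmul_eq_mul, hones]
    push_cast
    field_simp
  -- second moment
  have hS2 : ∑ g ∈ G, (f g) ^ 2 ≤ ℓ * M + C * ℓ ^ 2 * M := by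
    have hexp : ∀ g, (f g) ^ 2 = ∑ p ∈ ones, ∑ q ∈ ones,
        (if g p.1 = p.2 ∧ g q.1 = q.2 then (1:ℝ) else 0) := by
      intro g
      rw [hf_def, sq, Finset.sum_mul_sum]
      refine Finset.sum_congr rfl fun p _ => Finset.sum_congr rfl fun q _ => ?_
      by_cases h : g p.1 = p.2 <;> by_cases h' : g q.1 = q.2 <;> simp [h, h']
    rw [Finset.sum_congr rfl fun g _ => hexp g, Finset.sum_comm]
    have hswap : ∀ p ∈ ones, (∑ g ∈ G, ∑ q ∈ ones, if g p.1 = p.2 ∧ g q.1 = q.2 then (1:ℝ) else 0)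
        = ∑ q ∈ ones, ((G.filter fun g => g p.1 = p.2 ∧ g q.1 = q.2).card : ℝ) := by
      intro p _
      rw [Finset.sum_comm]
      exact Finset.sum_congr rfl fun q _ => Finset.sum_boole _ _
    rw [Finset.sum_congr rfl hswap]
    have hbound : ∀ p ∈ ones, (∑ q ∈ ones,
        ((G.filter fun g => g p.1 = p.2 ∧ g q.1 = q.2).card : ℝ))
        ≤ M / N + (ℓ * N) * (C * M / N ^ 2) := by
      intro p hp
      rw [← Finset.add_sum_erase _ _ hp]
      gcongr
      · simp only [and_self]
        exact le_of_eq (hcard1 p)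
      · calc (∑ q ∈ ones.erase p, ((G.filter fun g => g p.1 = p.2 ∧ g q.1 = q.2).card : ℝ))
            ≤ ∑ q ∈ ones.erase p, (C * M / N ^ 2) := by
              refine Finset.sum_le_sum fun q hq => ?_
              have hpq : p ≠ q := fun h => (Finset.ne_of_mem_erase hq) h.symm
              have := h2 p q hpq
              rw [div_le_iff₀ hMpos] at this
              calc ((G.filter fun g => g p.1 = p.2 ∧ g q.1 = q.2).card : ℝ)
                  ≤ C / N ^ 2 * M := this
                _ = C * M / N ^ 2 := by ring
          _ ≤ (ℓ * N) * (C * M / N ^ 2) := by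
              rw [Finset.sum_const, nsmul_eq_mul]
              have hcle : ((ones.erase p).card : ℝ) ≤ (ℓ * N : ℕ) := by
                exact_mod_cast le_trans (Finset.card_erase_le) (le_of_eq hones)
              have hpos : (0:ℝ) ≤ C * M / N ^ 2 := by positivity
              push_cast at hcle ⊢
              exact mul_le_mul_of_nonneg_right hcle hpos
    calc (∑ p ∈ ones, ∑ q ∈ ones, ((G.filter fun g => g p.1 = p.2 ∧ g q.1 = q.2).card : ℝ))
        ≤ ∑ _p ∈ ones, (M / N + (ℓ * N) * (C * M / N ^ 2)) := Finset.sum_le_sum hbound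
      _ = (ℓ * N) * (M / N + (ℓ * N) * (C * M / N ^ 2)) := by
          rw [Finset.sum_const, nsmul_eq_mul, hones]; push_cast; ring
      _ = ℓ * M + C * ℓ ^ 2 * M := by field_simp
  -- the good event
  set A : Finset (Fin n → Fin N) := G.filter (fun g => (k:ℝ) ≤ f g) with hA_def
  set R : ℝ := (A.card : ℝ) with hR_def
  have hR0 : 0 ≤ R := by rw [hR_def]; positivity
  -- step 1 : sum of kmax ≥ R
  have hstep1 : R ≤ ∑ g ∈ G, kmax (fun i => b i (g i)) k := by
    have h1' : ∀ g ∈ A, (1:ℝ) ≤ kmax (fun i => b i (g i)) k := by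
      intro g hg
      obtain ⟨hgG, hgk⟩ := Finset.mem_filter.mp hg
      apply kmax_ge_one _ (fun i => hb01 i (g i)) k hk1
      have := hfX g
      rw [this] at hgk
      exact_mod_cast hgk
    calc R = ∑ _g ∈ A, (1:ℝ) := by rw [Finset.sum_const, nsmul_eq_mul, mul_one]
      _ ≤ ∑ g ∈ A, kmax (fun i => b i (g i)) k := Finset.sum_le_sum h1'
      _ ≤ ∑ g ∈ G, kmax (fun i => b i (g i)) k := by
          apply Finset.sum_le_sum_of_subset_of_nonneg (Finset.filter_subset _ _)
          intro g _ _
          exact kmax_nonneg _ (fun i => (hb01 i (g i)).elim (fun h => le_of_eq h.symm)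
            (fun h => by rw [h]; norm_num)) k
  -- step 2 : sum over A of f is large
  have hstep2 : (ℓ : ℝ) * M - k * M ≤ ∑ g ∈ A, f g := by
    have hsplit : ∑ g ∈ G, f g = (∑ g ∈ A, f g) +
        ∑ g ∈ G.filter (fun g => ¬ ((k:ℝ) ≤ f g)), f g := by
      rw [hA_def]
      exact (Finset.sum_filter_add_sum_filter_not G _ f).symm
    have hcompl : ∑ g ∈ G.filter (fun g => ¬ ((k:ℝ) ≤ f g)), f g ≤ k * M := by
      calc ∑ g ∈ G.filter (fun g => ¬ ((k:ℝ) ≤ f g)), f g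
          ≤ ∑ _g ∈ G.filter (fun g => ¬ ((k:ℝ) ≤ f g)), (k:ℝ) :=
            Finset.sum_le_sum (fun g hg => le_of_not_ge (Finset.mem_filter.mp hg).2)
        _ = ((G.filter (fun g => ¬ ((k:ℝ) ≤ f g))).card : ℝ) * k := by
            rw [Finset.sum_const, nsmul_eq_mul]
        _ ≤ M * k := by
            apply mul_le_mul_of_nonneg_right _ (by positivity)
            rw [hMdef]
            exact_mod_cast Finset.card_filter_le _ _
        _ = k * M := by ring
    have := hS1
    linarith
  -- step 3 : Cauchy-Schwarz
  have hstep3 : (∑ g ∈ A, f g) ^ 2 ≤ ((ℓ:ℝ) * M + C * ℓ ^ 2 * M) * R := by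
    have hcs := Finset.sum_mul_sq_le_sq_mul_sq A f (fun _ => (1:ℝ))
    simp only [mul_one, one_pow] at hcs
    rw [Finset.sum_const, nsmul_eq_mul, mul_one] at hcs
    calc (∑ g ∈ A, f g) ^ 2 ≤ (∑ g ∈ A, f g ^ 2) * R := hcs
      _ ≤ ((ℓ:ℝ) * M + C * ℓ ^ 2 * M) * R := by
          apply mul_le_mul_of_nonneg_right _ hR0
          calc ∑ g ∈ A, f g ^ 2 ≤ ∑ g ∈ G, f g ^ 2 := by
                apply Finset.sum_le_sum_of_subset_of_nonneg (Finset.filter_subset _ _)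
                intro g _ _
                positivity
            _ ≤ (ℓ:ℝ) * M + C * ℓ ^ 2 * M := hS2
  -- combine
  have hL2 : (2:ℝ) ≤ (ℓ:ℝ) := by exact_mod_cast hℓ2
  have hK1 : (1:ℝ) ≤ (k:ℝ) := by exact_mod_cast hk1
  have hLK : 2 * (k:ℝ) ≤ (ℓ:ℝ) := by exact_mod_cast hk2
  have hF23 : (((ℓ:ℝ) - (k:ℝ)) * M) ^ 2 ≤ ((ℓ:ℝ) * M + C * (ℓ:ℝ) ^ 2 * M) * R := by
    refine le_trans (pow_le_pow_left₀ ?_ ?_ 2) hstep3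
    · nlinarith
    · nlinarith [hstep2]
  have hRM : M ≤ (2 + 4 * C) * R :=
    aux_main (ℓ:ℝ) (k:ℝ) C M R hC hL2 hK1 hLK hMpos hR0 hF23
  rw [ge_iff_le, div_le_div_iff₀ (by linarith) hMpos, one_mul]
  calc M ≤ (2 + 4 * C) * R := hRM
    _ ≤ (∑ g ∈ G, kmax (fun i => b i (g i)) k) * (2 + 4 * C) := by
        rw [mul_comm]
        exact mul_le_mul_of_nonneg_right hstep1 (by linarith)
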